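/- arXiv:2012.06237 — 5 statements merged into one kernel-verified Lean document; each statement's English description precedes it below -/
import Mathlib

section
/- Let J = L ⋈ R be the natural join of instances L (over attributes A_L) and R (over attributes A_R) with join attributes X = A_L ∩ A_R. For any attribute set A ⊆ A_L \ X and any attribute set B ⊆ A_R \ X: if the functional dependency X → B does NOT hold in J, then the functional dependency A → B does not hold in J either. -/
variable {α V : Type*}

/-- Restriction of a tuple over attribute set `A` to a subset `B`. -/
def restrict {A B : Set α} (h : B ⊆ A) (t : {a // a ∈ A} → V) : {b // b ∈ B} → V :=
  fun b => t ⟨b.1, h b.2⟩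

/-- Two tuples over `A` agree on all attributes of `S`. -/
def AgreeOn {A : Set α} (t1 t2 : {a // a ∈ A} → V) (S : Set α) : Prop :=
  ∀ a : {a // a ∈ A}, a.1 ∈ S → t1 a = t2 a

/-- The functional dependency `S → T` holds in the instance `I`. -/
def FDHolds {A : Set α} (I : Set ({a // a ∈ A} → V)) (S T : Set α) : Prop :=
  ∀ t1 ∈ I, ∀ t2 ∈ I, AgreeOn t1 t2 S → AgreeOn t1 t2 T

/-- Natural join of `L` (over `AL`) and `R` (over `AR`) on `AL ∩ AR`. -/
def Join (AL AR : Set α) (L : Set ({a // a ∈ AL} → V)) (R : Set ({a // a ∈ AR} → V)) :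
    Set ({a // a ∈ AL ∪ AR} → V) :=
  {t | restrict Set.subset_union_left t ∈ L ∧ restrict Set.subset_union_right t ∈ R}

/-- If `X → B` fails in the join `J = L ⋈ R` (with `X = A_L ∩ A_R`), then for
`A ⊆ A_L \ X` and `B ⊆ A_R \ X`, the FD `A → B` fails in `J` as well. -/
theorem not_join_att_implies_not_lhs (AL AR : Set α)
    (L : Set ({a // a ∈ AL} → V)) (R : Set ({a // a ∈ AR} → V))
    (A B : Set α) (hA : A ⊆ AL \ (AL ∩ AR)) (hB : B ⊆ AR \ (AL ∩ AR))
    (h : ¬ FDHolds (Join AL AR L R) (AL ∩ AR) B) :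
    ¬ FDHolds (Join AL AR L R) A B := by
  intro hFD
  apply h
  intro t1 h1 t2 h2 hX
  classical
  -- build the mixed tuple t3
  set t3 : {a // a ∈ AL ∪ AR} → V := fun a => if ha : a.1 ∈ AL then t1 a else t2 a with ht3
  have h3 : t3 ∈ Join AL AR L R := by
    constructor
    · have : restrict (Set.subset_union_left (s := AL) (t := AR)) t3
          = restrict Set.subset_union_left t1 := by
        funext a
        simp [restrict, ht3, a.2]
      rw [this]; exact h1.1
    · have : restrict (Set.subset_union_right (s := AL) (t := AR)) t3
          = restrict Set.subset_union_right t2 := by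
        funext a
        by_cases ha : a.1 ∈ AL
        · have := hX ⟨a.1, Or.inr a.2⟩ ⟨ha, a.2⟩
          simp [restrict, ht3, ha, this]
        · simp [restrict, ht3, ha]
      rw [this]; exact h2.2
  have hAgreeA : AgreeOn t1 t3 A := by
    intro a haA
    have haL : a.1 ∈ AL := (hA haA).1
    simp [ht3, haL]
  have := hFD t1 h1 t3 h3 hAgreeA
  intro a haB
  have haR : a.1 ∈ AR := (hB haB).1
  have haNL : a.1 ∉ AL := fun hl => (hB haB).2 ⟨hl, haR⟩
  have h3a : t3 a = t2 a := by simp [ht3, haNL]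
  calc t1 a = t3 a := this a haB
    _ = t2 a := h3a
end

section
/- Let J = L ⋈ R be the natural join of instances L (over A_L) and R (over A_R) with join attributes X = A_L ∩ A_R. For any A ⊆ A_L, A' ⊆ A_R, and b ∈ A_R: if the functional dependency (A ∪ A') → {b} holds in J, then the functional dependency (X ∪ A') → {b} holds in J. -/
variable {α V : Type*}

/-- If `A ∪ A' → {b}` holds in `J = L ⋈ R` (with `A ⊆ A_L`, `A' ⊆ A_R`, `b ∈ A_R`),
then `X ∪ A' → {b}` holds in `J`, where `X = A_L ∩ A_R`. -/
theorem lhs_replaceable_by_join_attributes (AL AR : Set α)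
    (L : Set ({a // a ∈ AL} → V)) (R : Set ({a // a ∈ AR} → V))
    (A A' : Set α) (b : α) (hA : A ⊆ AL) (hA' : A' ⊆ AR) (hb : b ∈ AR)
    (h : FDHolds (Join AL AR L R) (A ∪ A') {b}) :
    FDHolds (Join AL AR L R) ((AL ∩ AR) ∪ A') {b} := by
  classical
  intro t1 ht1 t2 ht2 hag
  -- build t3: L-part of t1, R-part of t2
  set t3 : {a // a ∈ AL ∪ AR} → V :=
    fun a => if ha : a.1 ∈ AL then t1 a else t2 a with ht3def
  have hXA' : ∀ a : {a // a ∈ AL ∪ AR}, a.1 ∈ AL → a.1 ∈ AR → t1 a = t2 a := by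
    intro a hL hR; exact hag a (Or.inl ⟨hL, hR⟩)
  have ht3R : ∀ a : {a // a ∈ AL ∪ AR}, a.1 ∈ AR → t3 a = t2 a := by
    intro a hR
    by_cases hL : a.1 ∈ AL
    · simp only [ht3def, dif_pos hL]; exact hXA' a hL hR
    · simp only [ht3def, dif_neg hL]
  have ht3L : ∀ a : {a // a ∈ AL ∪ AR}, a.1 ∈ AL → t3 a = t1 a := by
    intro a hL; simp only [ht3def, dif_pos hL]
  have ht3 : t3 ∈ Join AL AR L R := by
    constructor
    · have : restrict Set.subset_union_left t3 = restrict Set.subset_union_left t1 := by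
        funext a; exact ht3L ⟨a.1, Set.subset_union_left a.2⟩ a.2
      rw [this]; exact ht1.1
    · have : restrict Set.subset_union_right t3 = restrict Set.subset_union_right t2 := by
        funext a; exact ht3R ⟨a.1, Set.subset_union_right a.2⟩ a.2
      rw [this]; exact ht2.2
  have hag13 : AgreeOn t1 t3 (A ∪ A') := by
    intro a ha
    cases ha with
    | inl hA0 => exact (ht3L a (hA hA0)).symm
    | inr hA'0 =>
      rw [ht3R a (hA' hA'0)]
      exact hag a (Or.inr hA'0)
  have hb13 := h t1 ht1 t3 ht3 hag13
  intro a ha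
  have hab : a.1 = b := ha
  have h1 : t1 a = t3 a := hb13 a ha
  have h2 : t3 a = t2 a := ht3R a (hab ▸ hb)
  exact h1.trans h2
end

section
/- There exist finite instances L over attributes {X, A} and R over attributes {X, A', B} such that: (1) every functional dependency holding in L and every functional dependency holding in R is among those generated from the trivial FDs together with {X,A'} → {B} and {X,B} → {A'} by Armstrong's axioms; (2) the FD {A, A'} → {B} holds in the natural join L ⋈ R on X; and (3) {A, A'} → {B} is not derivable by Armstrong's axioms from the union of the FDs holding in L and the FDs holding in R. Concretely, L = {(0,0),(1,0),(1,1),(2,2)} as (X,A)-pairs and R = {(0,0,0),(1,0,0),(1,1,1),(2,1,0)} as (X,A',B)-triples witness this. -/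
variable {α V : Type*}

/-- Armstrong derivability of FDs from a set `F` of FDs. -/
inductive ArmDeriv {α : Type*} (F : Set (Set α × Set α)) : Set α → Set α → Prop
  | mem (S T : Set α) : (S, T) ∈ F → ArmDeriv F S T
  | refl (S T : Set α) : T ⊆ S → ArmDeriv F S T
  | aug (S T W : Set α) : ArmDeriv F S T → ArmDeriv F (S ∪ W) (T ∪ W)
  | trans (S T U : Set α) : ArmDeriv F S T → ArmDeriv F T U → ArmDeriv F S U

/-- The set of FDs (with attributes inside `U`) holding in the instance `I`. -/
def FDsOver {α V : Type*} {A : Set α} (I : Set ({a // a ∈ A} → V)) (U : Set α) :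
    Set (Set α × Set α) :=
  {p | p.1 ⊆ U ∧ p.2 ⊆ U ∧ FDHolds I p.1 p.2}

def mkL (x y : ℕ) : {a // a ∈ ({0, 1} : Set (Fin 4))} → ℕ :=
  fun a => if a.1 = 0 then x else y

def mkR (x y z : ℕ) : {a // a ∈ ({0, 2, 3} : Set (Fin 4))} → ℕ :=
  fun a => if a.1 = 0 then x else if a.1 = 2 then y else z

def Lw : Set ({a // a ∈ ({0, 1} : Set (Fin 4))} → ℕ) :=
  {mkL 0 0, mkL 1 0, mkL 1 1, mkL 2 2}

def Rw : Set ({a // a ∈ ({0, 2, 3} : Set (Fin 4))} → ℕ) :=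
  {mkR 0 0 0, mkR 1 0 0, mkR 1 1 1, mkR 2 1 0}

lemma h0L : (0 : Fin 4) ∈ ({0, 1} : Set (Fin 4)) := by simp
lemma h1L : (1 : Fin 4) ∈ ({0, 1} : Set (Fin 4)) := by simp
lemma h0R : (0 : Fin 4) ∈ ({0, 2, 3} : Set (Fin 4)) := by simp
lemma h2R : (2 : Fin 4) ∈ ({0, 2, 3} : Set (Fin 4)) := by simp
lemma h3R : (3 : Fin 4) ∈ ({0, 2, 3} : Set (Fin 4)) := by simp

@[simp] lemma mkL0 (x y : ℕ) (h) : mkL x y ⟨0, h⟩ = x := by simp [mkL]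
@[simp] lemma mkL1 (x y : ℕ) (h) : mkL x y ⟨1, h⟩ = y := by simp [mkL]
@[simp] lemma mkR0 (x y z : ℕ) (h) : mkR x y z ⟨0, h⟩ = x := by simp [mkR]
@[simp] lemma mkR2 (x y z : ℕ) (h) : mkR x y z ⟨2, h⟩ = y := by simp [mkR]
@[simp] lemma mkR3 (x y z : ℕ) (h) : mkR x y z ⟨3, h⟩ = z := by simp [mkR]
lemma Lmem1 : mkL 0 0 ∈ Lw := by simp [Lw]
lemma Lmem2 : mkL 1 0 ∈ Lw := by simp [Lw]
lemma Lmem3 : mkL 1 1 ∈ Lw := by simp [Lw]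
lemma Rmem1 : mkR 0 0 0 ∈ Rw := by simp [Rw]
lemma Rmem2 : mkR 1 0 0 ∈ Rw := by simp [Rw]
lemma Rmem3 : mkR 1 1 1 ∈ Rw := by simp [Rw]
lemma Rmem4 : mkR 2 1 0 ∈ Rw := by simp [Rw]

-- if 0 ∉ S and S ⊆ {0,1} and S → T holds in L, then 0 ∉ T
lemma Lfd0 {S T : Set (Fin 4)} (hS : S ⊆ {0, 1}) (h : FDHolds Lw S T)
    (h0 : (0 : Fin 4) ∉ S) : (0 : Fin 4) ∉ T := by
  intro h0T
  have hag : AgreeOn (mkL 0 0) (mkL 1 0) S := by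
    intro b hb
    have hb1 : b.1 = 1 := by
      have := hS hb
      simp only [Set.mem_insert_iff, Set.mem_singleton_iff] at this
      rcases this with h' | h'
      · exact absurd (h' ▸ hb) h0
      · exact h'
    have : b = ⟨1, h1L⟩ := Subtype.ext hb1
    rw [this]; simp
  have := h _ Lmem1 _ Lmem2 hag ⟨0, h0L⟩ h0T
  simp at this

lemma Lfd1 {S T : Set (Fin 4)} (hS : S ⊆ {0, 1}) (h : FDHolds Lw S T)
    (h1 : (1 : Fin 4) ∉ S) : (1 : Fin 4) ∉ T := by
  intro h1T
  have hag : AgreeOn (mkL 1 0) (mkL 1 1) S := by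
    intro b hb
    have hb1 : b.1 = 0 := by
      have := hS hb
      simp only [Set.mem_insert_iff, Set.mem_singleton_iff] at this
      rcases this with h' | h'
      · exact h'
      · exact absurd (h' ▸ hb) h1
    have : b = ⟨0, h0L⟩ := Subtype.ext hb1
    rw [this]; simp
  have := h _ Lmem2 _ Lmem3 hag ⟨1, h1L⟩ h1T
  simp at this
lemma memSR {b : Fin 4} (h : b ∈ ({0, 2, 3} : Set (Fin 4))) : b = 0 ∨ b = 2 ∨ b = 3 := by
  simpa using h

lemma Rfd0 {S T : Set (Fin 4)} (hS : S ⊆ {0, 2, 3}) (h : FDHolds Rw S T)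
    (h0 : (0 : Fin 4) ∉ S) : (0 : Fin 4) ∉ T := by
  intro h0T
  have hag : AgreeOn (mkR 0 0 0) (mkR 1 0 0) S := by
    intro b hb
    rcases memSR (hS hb) with h' | h' | h'
    · exact absurd (h' ▸ hb) h0
    · rw [show b = ⟨2, h2R⟩ from Subtype.ext h']; simp
    · rw [show b = ⟨3, h3R⟩ from Subtype.ext h']; simp
  have := h _ Rmem1 _ Rmem2 hag ⟨0, h0R⟩ h0T
  simp at this

lemma Rfd2a {S T : Set (Fin 4)} (hS : S ⊆ {0, 2, 3}) (h : FDHolds Rw S T)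
    (h0 : (0 : Fin 4) ∉ S) (h2 : (2 : Fin 4) ∉ S) : (2 : Fin 4) ∉ T := by
  intro h2T
  have hag : AgreeOn (mkR 1 0 0) (mkR 2 1 0) S := by
    intro b hb
    rcases memSR (hS hb) with h' | h' | h'
    · exact absurd (h' ▸ hb) h0
    · exact absurd (h' ▸ hb) h2
    · rw [show b = ⟨3, h3R⟩ from Subtype.ext h']; simp
  have := h _ Rmem2 _ Rmem4 hag ⟨2, h2R⟩ h2T
  simp at this

lemma Rfd3a {S T : Set (Fin 4)} (hS : S ⊆ {0, 2, 3}) (h : FDHolds Rw S T)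
    (h0 : (0 : Fin 4) ∉ S) (h3 : (3 : Fin 4) ∉ S) : (3 : Fin 4) ∉ T := by
  intro h3T
  have hag : AgreeOn (mkR 1 1 1) (mkR 2 1 0) S := by
    intro b hb
    rcases memSR (hS hb) with h' | h' | h'
    · exact absurd (h' ▸ hb) h0
    · rw [show b = ⟨2, h2R⟩ from Subtype.ext h']; simp
    · exact absurd (h' ▸ hb) h3
  have := h _ Rmem3 _ Rmem4 hag ⟨3, h3R⟩ h3T
  simp at this

lemma Rfdb {S T : Set (Fin 4)} (hS : S ⊆ {0, 2, 3}) (h : FDHolds Rw S T)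
    (h2 : (2 : Fin 4) ∉ S) (h3 : (3 : Fin 4) ∉ S) :
    (2 : Fin 4) ∉ T ∧ (3 : Fin 4) ∉ T := by
  have hag : AgreeOn (mkR 1 0 0) (mkR 1 1 1) S := by
    intro b hb
    rcases memSR (hS hb) with h' | h' | h'
    · rw [show b = ⟨0, h0R⟩ from Subtype.ext h']; simp
    · exact absurd (h' ▸ hb) h2
    · exact absurd (h' ▸ hb) h3
  constructor
  · intro h2T
    have := h _ Rmem2 _ Rmem3 hag ⟨2, h2R⟩ h2T
    simp at this
  · intro h3T
    have := h _ Rmem2 _ Rmem3 hag ⟨3, h3R⟩ h3T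
    simp at this
def F2 : Set (Set (Fin 4) × Set (Fin 4)) :=
  {((({0, 2} : Set (Fin 4)), ({3} : Set (Fin 4)))),
   ((({0, 3} : Set (Fin 4)), ({2} : Set (Fin 4))))}

lemma L_fds : ∀ p ∈ FDsOver Lw ({0, 1} : Set (Fin 4)), ArmDeriv F2 p.1 p.2 := by
  rintro ⟨S, T⟩ ⟨hS, hT, hfd⟩
  apply ArmDeriv.refl
  intro a haT
  have ha01 : a = 0 ∨ a = 1 := by simpa using hT haT
  by_contra haS
  rcases ha01 with rfl | rfl
  · exact Lfd0 hS hfd haS haT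
  · exact Lfd1 hS hfd haS haT

lemma R_fds : ∀ p ∈ FDsOver Rw ({0, 2, 3} : Set (Fin 4)), ArmDeriv F2 p.1 p.2 := by
  rintro ⟨S, T⟩ ⟨hS, hT, hfd⟩
  simp only
  by_cases h0 : (0 : Fin 4) ∈ S
  · by_cases h2 : (2 : Fin 4) ∈ S
    · -- S ⊇ {0,2}: use FD {0,2} → {3}
      have d1 : ArmDeriv F2 ({0, 2} : Set (Fin 4)) {3} := ArmDeriv.mem _ _ (by simp [F2])
      have d2 : ArmDeriv F2 (({0, 2} : Set (Fin 4)) ∪ S) (({3} : Set (Fin 4)) ∪ S) :=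
        ArmDeriv.aug _ _ _ d1
      have hU : (({0, 2} : Set (Fin 4)) ∪ S) = S := by
        apply Set.union_eq_self_of_subset_left
        intro a ha
        rcases (by simpa using ha : a = 0 ∨ a = 2) with rfl | rfl
        · exact h0
        · exact h2
      rw [hU] at d2
      refine ArmDeriv.trans _ _ _ d2 (ArmDeriv.refl _ _ ?_)
      intro a haT
      rcases memSR (hT haT) with rfl | rfl | rfl
      · exact Or.inr h0
      · exact Or.inr h2
      · exact Or.inl rfl
    · by_cases h3 : (3 : Fin 4) ∈ S
      · -- S ⊇ {0,3}: use FD {0,3} → {2}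
        have d1 : ArmDeriv F2 ({0, 3} : Set (Fin 4)) {2} := ArmDeriv.mem _ _ (by simp [F2])
        have d2 : ArmDeriv F2 (({0, 3} : Set (Fin 4)) ∪ S) (({2} : Set (Fin 4)) ∪ S) :=
          ArmDeriv.aug _ _ _ d1
        have hU : (({0, 3} : Set (Fin 4)) ∪ S) = S := by
          apply Set.union_eq_self_of_subset_left
          intro a ha
          rcases (by simpa using ha : a = 0 ∨ a = 3) with rfl | rfl
          · exact h0
          · exact h3
        rw [hU] at d2
        refine ArmDeriv.trans _ _ _ d2 (ArmDeriv.refl _ _ ?_)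
        intro a haT
        rcases memSR (hT haT) with rfl | rfl | rfl
        · exact Or.inr h0
        · exact Or.inl rfl
        · exact Or.inr h3
      · -- S ⊆ {0}: trivial
        apply ArmDeriv.refl
        intro a haT
        rcases memSR (hT haT) with rfl | rfl | rfl
        · exact h0
        · exact absurd haT (Rfdb hS hfd h2 h3).1
        · exact absurd haT (Rfdb hS hfd h2 h3).2
  · apply ArmDeriv.refl
    intro a haT
    rcases memSR (hT haT) with rfl | rfl | rfl
    · exact absurd haT (Rfd0 hS hfd h0)
    · by_cases h2 : (2 : Fin 4) ∈ S
      · exact h2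
      · exact absurd haT (Rfd2a hS hfd h0 h2)
    · by_cases h3 : (3 : Fin 4) ∈ S
      · exact h3
      · exact absurd haT (Rfd3a hS hfd h0 h3)
abbrev UU : Set (Fin 4) := ({0, 1} : Set (Fin 4)) ∪ ({0, 2, 3} : Set (Fin 4))
lemma hU0 : (0 : Fin 4) ∈ UU := Or.inl h0L
lemma hU1 : (1 : Fin 4) ∈ UU := Or.inl h1L
lemma hU2 : (2 : Fin 4) ∈ UU := Or.inr h2R
lemma hU3 : (3 : Fin 4) ∈ UU := Or.inr h3R

example (t : {a // a ∈ UU} → ℕ) (hL : restrict Set.subset_union_left t = mkL 0 0) :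
    t ⟨0, hU0⟩ = 0 := congrFun hL ⟨0, h0L⟩
example (t : {a // a ∈ UU} → ℕ) (hR : restrict Set.subset_union_right t = mkR 1 0 0) :
    t ⟨3, hU3⟩ = 0 := congrFun hR ⟨3, h3R⟩
lemma join_vals (t : {a // a ∈ UU} → ℕ)
    (ht : t ∈ Join ({0, 1} : Set (Fin 4)) ({0, 2, 3} : Set (Fin 4)) Lw Rw) :
    (t ⟨0, hU0⟩, t ⟨1, hU1⟩, t ⟨2, hU2⟩, t ⟨3, hU3⟩) ∈
      ({(0,0,0,0),(1,0,0,0),(1,0,1,1),(1,1,0,0),(1,1,1,1),(2,2,1,0)} : Set (ℕ×ℕ×ℕ×ℕ)) := by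
  obtain ⟨hL, hR⟩ := ht
  simp only [Lw, Set.mem_insert_iff, Set.mem_singleton_iff] at hL
  simp only [Rw, Set.mem_insert_iff, Set.mem_singleton_iff] at hR
  rcases hL with hL | hL | hL | hL
  · rcases hR with hR | hR | hR | hR
    · have e0 : t ⟨0, hU0⟩ = 0 := congrFun hL ⟨0, h0L⟩
      have e1 : t ⟨1, hU1⟩ = 0 := congrFun hL ⟨1, h1L⟩
      have f0 : t ⟨0, hU0⟩ = 0 := congrFun hR ⟨0, h0R⟩
      have f2 : t ⟨2, hU2⟩ = 0 := congrFun hR ⟨2, h2R⟩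
      have f3 : t ⟨3, hU3⟩ = 0 := congrFun hR ⟨3, h3R⟩
      rw [e0, e1, f2, f3]; simp
    · have e0 : t ⟨0, hU0⟩ = 0 := congrFun hL ⟨0, h0L⟩
      have e1 : t ⟨1, hU1⟩ = 0 := congrFun hL ⟨1, h1L⟩
      have f0 : t ⟨0, hU0⟩ = 1 := congrFun hR ⟨0, h0R⟩
      have f2 : t ⟨2, hU2⟩ = 0 := congrFun hR ⟨2, h2R⟩
      have f3 : t ⟨3, hU3⟩ = 0 := congrFun hR ⟨3, h3R⟩
      exfalso; omega
    · have e0 : t ⟨0, hU0⟩ = 0 := congrFun hL ⟨0, h0L⟩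
      have e1 : t ⟨1, hU1⟩ = 0 := congrFun hL ⟨1, h1L⟩
      have f0 : t ⟨0, hU0⟩ = 1 := congrFun hR ⟨0, h0R⟩
      have f2 : t ⟨2, hU2⟩ = 1 := congrFun hR ⟨2, h2R⟩
      have f3 : t ⟨3, hU3⟩ = 1 := congrFun hR ⟨3, h3R⟩
      exfalso; omega
    · have e0 : t ⟨0, hU0⟩ = 0 := congrFun hL ⟨0, h0L⟩
      have e1 : t ⟨1, hU1⟩ = 0 := congrFun hL ⟨1, h1L⟩
      have f0 : t ⟨0, hU0⟩ = 2 := congrFun hR ⟨0, h0R⟩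
      have f2 : t ⟨2, hU2⟩ = 1 := congrFun hR ⟨2, h2R⟩
      have f3 : t ⟨3, hU3⟩ = 0 := congrFun hR ⟨3, h3R⟩
      exfalso; omega
  · rcases hR with hR | hR | hR | hR
    · have e0 : t ⟨0, hU0⟩ = 1 := congrFun hL ⟨0, h0L⟩
      have e1 : t ⟨1, hU1⟩ = 0 := congrFun hL ⟨1, h1L⟩
      have f0 : t ⟨0, hU0⟩ = 0 := congrFun hR ⟨0, h0R⟩
      have f2 : t ⟨2, hU2⟩ = 0 := congrFun hR ⟨2, h2R⟩
      have f3 : t ⟨3, hU3⟩ = 0 := congrFun hR ⟨3, h3R⟩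
      exfalso; omega
    · have e0 : t ⟨0, hU0⟩ = 1 := congrFun hL ⟨0, h0L⟩
      have e1 : t ⟨1, hU1⟩ = 0 := congrFun hL ⟨1, h1L⟩
      have f0 : t ⟨0, hU0⟩ = 1 := congrFun hR ⟨0, h0R⟩
      have f2 : t ⟨2, hU2⟩ = 0 := congrFun hR ⟨2, h2R⟩
      have f3 : t ⟨3, hU3⟩ = 0 := congrFun hR ⟨3, h3R⟩
      rw [e0, e1, f2, f3]; simp
    · have e0 : t ⟨0, hU0⟩ = 1 := congrFun hL ⟨0, h0L⟩
      have e1 : t ⟨1, hU1⟩ = 0 := congrFun hL ⟨1, h1L⟩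
      have f0 : t ⟨0, hU0⟩ = 1 := congrFun hR ⟨0, h0R⟩
      have f2 : t ⟨2, hU2⟩ = 1 := congrFun hR ⟨2, h2R⟩
      have f3 : t ⟨3, hU3⟩ = 1 := congrFun hR ⟨3, h3R⟩
      rw [e0, e1, f2, f3]; simp
    · have e0 : t ⟨0, hU0⟩ = 1 := congrFun hL ⟨0, h0L⟩
      have e1 : t ⟨1, hU1⟩ = 0 := congrFun hL ⟨1, h1L⟩
      have f0 : t ⟨0, hU0⟩ = 2 := congrFun hR ⟨0, h0R⟩
      have f2 : t ⟨2, hU2⟩ = 1 := congrFun hR ⟨2, h2R⟩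
      have f3 : t ⟨3, hU3⟩ = 0 := congrFun hR ⟨3, h3R⟩
      exfalso; omega
  · rcases hR with hR | hR | hR | hR
    · have e0 : t ⟨0, hU0⟩ = 1 := congrFun hL ⟨0, h0L⟩
      have e1 : t ⟨1, hU1⟩ = 1 := congrFun hL ⟨1, h1L⟩
      have f0 : t ⟨0, hU0⟩ = 0 := congrFun hR ⟨0, h0R⟩
      have f2 : t ⟨2, hU2⟩ = 0 := congrFun hR ⟨2, h2R⟩
      have f3 : t ⟨3, hU3⟩ = 0 := congrFun hR ⟨3, h3R⟩
      exfalso; omega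
    · have e0 : t ⟨0, hU0⟩ = 1 := congrFun hL ⟨0, h0L⟩
      have e1 : t ⟨1, hU1⟩ = 1 := congrFun hL ⟨1, h1L⟩
      have f0 : t ⟨0, hU0⟩ = 1 := congrFun hR ⟨0, h0R⟩
      have f2 : t ⟨2, hU2⟩ = 0 := congrFun hR ⟨2, h2R⟩
      have f3 : t ⟨3, hU3⟩ = 0 := congrFun hR ⟨3, h3R⟩
      rw [e0, e1, f2, f3]; simp
    · have e0 : t ⟨0, hU0⟩ = 1 := congrFun hL ⟨0, h0L⟩
      have e1 : t ⟨1, hU1⟩ = 1 := congrFun hL ⟨1, h1L⟩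
      have f0 : t ⟨0, hU0⟩ = 1 := congrFun hR ⟨0, h0R⟩
      have f2 : t ⟨2, hU2⟩ = 1 := congrFun hR ⟨2, h2R⟩
      have f3 : t ⟨3, hU3⟩ = 1 := congrFun hR ⟨3, h3R⟩
      rw [e0, e1, f2, f3]; simp
    · have e0 : t ⟨0, hU0⟩ = 1 := congrFun hL ⟨0, h0L⟩
      have e1 : t ⟨1, hU1⟩ = 1 := congrFun hL ⟨1, h1L⟩
      have f0 : t ⟨0, hU0⟩ = 2 := congrFun hR ⟨0, h0R⟩
      have f2 : t ⟨2, hU2⟩ = 1 := congrFun hR ⟨2, h2R⟩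
      have f3 : t ⟨3, hU3⟩ = 0 := congrFun hR ⟨3, h3R⟩
      exfalso; omega
  · rcases hR with hR | hR | hR | hR
    · have e0 : t ⟨0, hU0⟩ = 2 := congrFun hL ⟨0, h0L⟩
      have e1 : t ⟨1, hU1⟩ = 2 := congrFun hL ⟨1, h1L⟩
      have f0 : t ⟨0, hU0⟩ = 0 := congrFun hR ⟨0, h0R⟩
      have f2 : t ⟨2, hU2⟩ = 0 := congrFun hR ⟨2, h2R⟩
      have f3 : t ⟨3, hU3⟩ = 0 := congrFun hR ⟨3, h3R⟩
      exfalso; omega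
    · have e0 : t ⟨0, hU0⟩ = 2 := congrFun hL ⟨0, h0L⟩
      have e1 : t ⟨1, hU1⟩ = 2 := congrFun hL ⟨1, h1L⟩
      have f0 : t ⟨0, hU0⟩ = 1 := congrFun hR ⟨0, h0R⟩
      have f2 : t ⟨2, hU2⟩ = 0 := congrFun hR ⟨2, h2R⟩
      have f3 : t ⟨3, hU3⟩ = 0 := congrFun hR ⟨3, h3R⟩
      exfalso; omega
    · have e0 : t ⟨0, hU0⟩ = 2 := congrFun hL ⟨0, h0L⟩
      have e1 : t ⟨1, hU1⟩ = 2 := congrFun hL ⟨1, h1L⟩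
      have f0 : t ⟨0, hU0⟩ = 1 := congrFun hR ⟨0, h0R⟩
      have f2 : t ⟨2, hU2⟩ = 1 := congrFun hR ⟨2, h2R⟩
      have f3 : t ⟨3, hU3⟩ = 1 := congrFun hR ⟨3, h3R⟩
      exfalso; omega
    · have e0 : t ⟨0, hU0⟩ = 2 := congrFun hL ⟨0, h0L⟩
      have e1 : t ⟨1, hU1⟩ = 2 := congrFun hL ⟨1, h1L⟩
      have f0 : t ⟨0, hU0⟩ = 2 := congrFun hR ⟨0, h0R⟩
      have f2 : t ⟨2, hU2⟩ = 1 := congrFun hR ⟨2, h2R⟩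
      have f3 : t ⟨3, hU3⟩ = 0 := congrFun hR ⟨3, h3R⟩
      rw [e0, e1, f2, f3]; simp
lemma join_fd : FDHolds (Join ({0, 1} : Set (Fin 4)) ({0, 2, 3} : Set (Fin 4)) Lw Rw)
    ({1, 2} : Set (Fin 4)) ({3} : Set (Fin 4)) := by
  intro t1 ht1 t2 ht2 hag a ha
  have ha3 : a = ⟨3, hU3⟩ := Subtype.ext (by simpa using ha)
  have g1 : t1 ⟨1, hU1⟩ = t2 ⟨1, hU1⟩ := hag ⟨1, hU1⟩ (by simp)
  have g2 : t1 ⟨2, hU2⟩ = t2 ⟨2, hU2⟩ := hag ⟨2, hU2⟩ (by simp)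
  have m1 := join_vals t1 ht1
  have m2 := join_vals t2 ht2
  simp only [Set.mem_insert_iff, Set.mem_singleton_iff, Prod.mk.injEq] at m1 m2
  rw [ha3]
  rcases m1 with m1 | m1 | m1 | m1 | m1 | m1 <;>
    rcases m2 with m2 | m2 | m2 | m2 | m2 | m2 <;> omega

def uu : Fin 4 → ℕ := ![1, 0, 1, 1]
def vv : Fin 4 → ℕ := ![2, 0, 1, 0]

lemma sound : ∀ S T : Set (Fin 4),
    ArmDeriv (FDsOver Lw ({0, 1} : Set (Fin 4)) ∪ FDsOver Rw ({0, 2, 3} : Set (Fin 4))) S T →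
    (∀ a ∈ S, uu a = vv a) → (∀ a ∈ T, uu a = vv a) := by
  intro S T h
  induction h with
  | mem S T hST =>
    intro hagr a haT
    rcases hST with ⟨hS, hT, hfd⟩ | ⟨hS, hT, hfd⟩
    · have h0S : (0 : Fin 4) ∉ S := fun h => by have := hagr 0 h; simp [uu, vv] at this
      rcases (by simpa using hT haT : a = 0 ∨ a = 1) with rfl | rfl
      · exact absurd haT (Lfd0 hS hfd h0S)
      · simp [uu, vv]
    · have h0S : (0 : Fin 4) ∉ S := fun h => by have := hagr 0 h; simp [uu, vv] at this
      have h3S : (3 : Fin 4) ∉ S := fun h => by have := hagr 3 h; simp [uu, vv] at this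
      rcases memSR (hT haT) with rfl | rfl | rfl
      · exact absurd haT (Rfd0 hS hfd h0S)
      · simp [uu, vv]
      · exact absurd haT (Rfd3a hS hfd h0S h3S)
  | refl S T hTS => exact fun hagr a haT => hagr a (hTS haT)
  | aug S T W _ ih =>
    intro hagr a haT
    rcases haT with h | h
    · exact ih (fun b hb => hagr b (Or.inl hb)) a h
    · exact hagr a (Or.inr h)
  | trans S T U _ _ ih1 ih2 => exact fun hagr => ih2 (ih1 hagr)

lemma not_deriv :
    ¬ ArmDeriv (FDsOver Lw ({0, 1} : Set (Fin 4)) ∪ FDsOver Rw ({0, 2, 3} : Set (Fin 4)))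
      ({1, 2} : Set (Fin 4)) ({3} : Set (Fin 4)) := by
  intro h
  have := sound _ _ h (by
    intro a ha
    rcases (by simpa using ha : a = 1 ∨ a = 2) with rfl | rfl <;> simp [uu, vv])
    3 (by simp)
  simp [uu, vv] at this
/-- Attributes: `X = 0`, `A = 1`, `A' = 2`, `B = 3`. There are finite instances `L`
over `{X, A}` and `R` over `{X, A', B}` such that every FD holding in `L` or in `R`
is Armstrong-derivable from `{X,A'} → {B}` and `{X,B} → {A'}` (together with the
trivial FDs, built into `ArmDeriv.refl`), the FD `{A, A'} → {B}` holds in the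
natural join `L ⋈ R`, yet it is not Armstrong-derivable from the union of the FDs
holding in `L` and in `R`. Witness: `L = {(0,0),(1,0),(1,1),(2,2)}` as `(X,A)`-pairs
and `R = {(0,0,0),(1,0,0),(1,1,1),(2,1,0)}` as `(X,A',B)`-triples. -/
theorem join_fd_not_armstrong_inferable :
    ∃ (L : Set ({a // a ∈ ({0, 1} : Set (Fin 4))} → ℕ))
      (R : Set ({a // a ∈ ({0, 2, 3} : Set (Fin 4))} → ℕ)),
      L.Finite ∧ R.Finite ∧
      (∀ p ∈ FDsOver L ({0, 1} : Set (Fin 4)),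
        ArmDeriv ({((({0, 2} : Set (Fin 4)), ({3} : Set (Fin 4)))),
                   ((({0, 3} : Set (Fin 4)), ({2} : Set (Fin 4))))} :
            Set (Set (Fin 4) × Set (Fin 4))) p.1 p.2) ∧
      (∀ p ∈ FDsOver R ({0, 2, 3} : Set (Fin 4)),
        ArmDeriv ({((({0, 2} : Set (Fin 4)), ({3} : Set (Fin 4)))),
                   ((({0, 3} : Set (Fin 4)), ({2} : Set (Fin 4))))} :
            Set (Set (Fin 4) × Set (Fin 4))) p.1 p.2) ∧
      FDHolds (Join {0, 1} {0, 2, 3} L R) ({1, 2} : Set (Fin 4)) ({3} : Set (Fin 4)) ∧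
      ¬ ArmDeriv (FDsOver L ({0, 1} : Set (Fin 4)) ∪ FDsOver R ({0, 2, 3} : Set (Fin 4)))
          ({1, 2} : Set (Fin 4)) ({3} : Set (Fin 4)) := by
  refine ⟨Lw, Rw, ?_, ?_, L_fds, R_fds, join_fd, not_deriv⟩
  · exact Set.Finite.insert _ (Set.Finite.insert _ (Set.Finite.insert _ (Set.finite_singleton _)))
  · exact Set.Finite.insert _ (Set.Finite.insert _ (Set.Finite.insert _ (Set.finite_singleton _)))
end

section
/- If instance L over A_L satisfies FD S → {x} for every x ∈ X (where X = A_L ∩ A_R) and instance R over A_R satisfies X → T for T ⊆ A_R, then the natural join J = L ⋈ R satisfies S → T, for any S ⊆ A_L. -/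
variable {α V : Type*}

/-- If `L` satisfies `S → {x}` for each join attribute `x ∈ X = A_L ∩ A_R` and `R`
satisfies `X → T`, then the natural join satisfies `S → T`. -/
theorem inferred_join_fd (AL AR : Set α)
    (L : Set ({a // a ∈ AL} → V)) (R : Set ({a // a ∈ AR} → V))
    (S T : Set α) (hS : S ⊆ AL) (hT : T ⊆ AR)
    (hL : ∀ x ∈ AL ∩ AR, FDHolds L S {x})
    (hR : FDHolds R (AL ∩ AR) T) :
    FDHolds (Join AL AR L R) S T := by
  intro t1 ht1 t2 ht2 hagree a haT
  have hL1 := ht1.1; have hL2 := ht2.1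
  have hR1 := ht1.2; have hR2 := ht2.2
  -- left restrictions agree on S
  have hLagree : AgreeOn (restrict (A := AL ∪ AR) Set.subset_union_left t1)
      (restrict Set.subset_union_left t2) S := by
    intro b hb
    exact hagree ⟨b.1, Or.inl b.2⟩ hb
  -- right restrictions agree on AL ∩ AR
  have hRagree : AgreeOn (restrict (A := AL ∪ AR) Set.subset_union_right t1)
      (restrict Set.subset_union_right t2) (AL ∩ AR) := by
    intro b hb
    have := hL b.1 hb _ hL1 _ hL2 hLagree ⟨b.1, hb.1⟩ rfl
    exact this
  have := hR _ hR1 _ hR2 hRagree ⟨a.1, hT haT⟩ haT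
  exact this
end

section
/- Under the preservation of join value sets (π_X(L) = π_X(R)), a functional dependency S → T with S, T ⊆ A_L holds in the natural join J = L ⋈ R if and only if it holds in L. -/
variable {α V : Type*}

/-- Under preservation of join value sets (`π_X(L) = π_X(R)`), an FD `S → T` with
`S, T ⊆ A_L` holds in the natural join iff it holds in `L`. -/
theorem fd_iff_under_value_set_preservation [Nonempty V] (AL AR : Set α)
    (L : Set ({a // a ∈ AL} → V)) (R : Set ({a // a ∈ AR} → V))
    (hX : restrict (Set.inter_subset_left : AL ∩ AR ⊆ AL) '' L =
          restrict (Set.inter_subset_right : AL ∩ AR ⊆ AR) '' R)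
    (S T : Set α) (hS : S ⊆ AL) (hT : T ⊆ AL) :
    FDHolds (Join AL AR L R) S T ↔ FDHolds L S T := by
  classical
  constructor
  · -- forward: FD in join implies FD in L
    intro hJ t1 ht1 t2 ht2 hag
    have h1 : restrict (Set.inter_subset_left : AL ∩ AR ⊆ AL) t1 ∈
        restrict (Set.inter_subset_right : AL ∩ AR ⊆ AR) '' R := by
      rw [← hX]; exact ⟨t1, ht1, rfl⟩
    have h2 : restrict (Set.inter_subset_left : AL ∩ AR ⊆ AL) t2 ∈
        restrict (Set.inter_subset_right : AL ∩ AR ⊆ AR) '' R := by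
      rw [← hX]; exact ⟨t2, ht2, rfl⟩
    obtain ⟨r1, hr1, hr1e⟩ := h1
    obtain ⟨r2, hr2, hr2e⟩ := h2
    let u1 : {a // a ∈ AL ∪ AR} → V := fun a =>
      if h : a.1 ∈ AL then t1 ⟨a.1, h⟩ else r1 ⟨a.1, a.2.resolve_left h⟩
    let u2 : {a // a ∈ AL ∪ AR} → V := fun a =>
      if h : a.1 ∈ AL then t2 ⟨a.1, h⟩ else r2 ⟨a.1, a.2.resolve_left h⟩
    have hu1L : restrict Set.subset_union_left u1 = t1 := by
      funext a; simp [restrict, u1, a.2]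
    have hu2L : restrict Set.subset_union_left u2 = t2 := by
      funext a; simp [restrict, u2, a.2]
    have hu1R : restrict Set.subset_union_right u1 = r1 := by
      funext a
      by_cases h : a.1 ∈ AL
      · have := congrFun hr1e ⟨a.1, ⟨h, a.2⟩⟩
        simpa [restrict, u1, h] using this.symm
      · simp [restrict, u1, h]
    have hu2R : restrict Set.subset_union_right u2 = r2 := by
      funext a
      by_cases h : a.1 ∈ AL
      · have := congrFun hr2e ⟨a.1, ⟨h, a.2⟩⟩
        simpa [restrict, u2, h] using this.symm
      · simp [restrict, u2, h]
    have hu1 : u1 ∈ Join AL AR L R := ⟨by rw [hu1L]; exact ht1, by rw [hu1R]; exact hr1⟩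
    have hu2 : u2 ∈ Join AL AR L R := ⟨by rw [hu2L]; exact ht2, by rw [hu2R]; exact hr2⟩
    have hagJ : AgreeOn u1 u2 S := by
      intro a haS
      have hAL : a.1 ∈ AL := hS haS
      simpa [u1, u2, hAL] using hag ⟨a.1, hAL⟩ haS
    have hTJ := hJ u1 hu1 u2 hu2 hagJ
    intro a haT
    have := hTJ ⟨a.1, Or.inl a.2⟩ haT
    simpa [u1, u2, a.2] using this
  · -- backward
    intro hL u1 hu1 u2 hu2 hag
    have hagL : AgreeOn (restrict Set.subset_union_left u1)
        (restrict Set.subset_union_left u2) S := by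
      intro a haS
      exact hag ⟨a.1, Or.inl a.2⟩ haS
    have := hL _ hu1.1 _ hu2.1 hagL
    intro a haT
    have h := this ⟨a.1, hT haT⟩ haT
    simpa [restrict] using h
end
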